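/- Let A : [0,∞) × ℝ → ℝ be C¹ and satisfy ∂_t A + ∂_x A = -g and ∂_t A - ∂_x A = -h for continuous g, h. Suppose |A(0,y)| ≤ C₀' for all y, and that for each (t,x), ∫_0^t g(τ, x - t + τ)² dτ ≤ K and ∫_0^t h(τ, x + t - τ)² dτ ≤ K, and g(τ, y) = 0 for |y| ≥ C₀ + τ (similarly h). Then |A(t,x)| ≤ C₀' + sqrt(K) · sqrt(min(t + x + C₀, t - x + C₀, t)) whenever |x| < C₀ + t, and |A(t,x)| ≤ C₀' otherwise. -/

import Mathlib

open MeasureTheory intervalIntegral Set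

lemma cs (G : ℝ → ℝ) (a b : ℝ) (hab : a ≤ b) (hG : Continuous G) :
    ∫ τ in a..b, |G τ| ≤ Real.sqrt (b - a) * Real.sqrt (∫ τ in a..b, (G τ)^2) := by
  set μ := volume.restrict (Set.Ioc a b) with hμdef
  haveI : IsFiniteMeasure μ := ⟨by simp [hμdef, Measure.restrict_apply_univ]⟩
  obtain ⟨C, hC⟩ := (isCompact_Icc (a := a) (b := b)).exists_bound_of_continuousOn
    (hG.continuousOn)
  have hbd : ∀ᵐ τ ∂μ, ‖|G τ|‖ ≤ C := by
    filter_upwards [ae_restrict_mem measurableSet_Ioc] with τ hτ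
    simpa [abs_abs] using hC τ (Ioc_subset_Icc_self hτ)
  have hmemG : MemLp (fun τ => |G τ|) (ENNReal.ofReal 2) μ :=
    MemLp.of_bound (hG.abs.aestronglyMeasurable) C hbd
  have hmem1 : MemLp (fun _ : ℝ => (1:ℝ)) (ENNReal.ofReal 2) μ := memLp_const 1
  have key := integral_mul_le_Lp_mul_Lq_of_nonneg (Real.holderConjugate_iff_eq_conjExponent (by norm_num) |>.2 (by norm_num))
    (Filter.Eventually.of_forall fun τ => zero_le_one)
    (Filter.Eventually.of_forall fun τ => abs_nonneg (G τ)) hmem1 hmemG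
  simp only [one_mul, one_pow] at key
  have h1 : (∫ _ : ℝ, (1:ℝ) ∂μ) = b - a := by
    simp [hμdef, Real.volume_Ioc, ENNReal.toReal_ofReal (sub_nonneg.2 hab), hab]
  have h2 : (∫ τ, |G τ|^(2:ℝ) ∂μ) = ∫ τ in a..b, (G τ)^2 := by
    rw [intervalIntegral.integral_of_le hab]
    congr 1
    ext τ
    rw [show ((2:ℝ)) = ((2:ℕ):ℝ) by norm_num, Real.rpow_natCast, sq_abs]
  have h3 : (∫ _ : ℝ, (1:ℝ)^(2:ℝ) ∂μ) = b - a := by simpa using h1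
  rw [intervalIntegral.integral_of_le hab]
  calc ∫ τ in Set.Ioc a b, |G τ| = ∫ τ, |G τ| ∂μ := rfl
    _ ≤ (∫ τ, (1:ℝ)^(2:ℝ) ∂μ) ^ ((1:ℝ)/2) * (∫ τ, |G τ|^(2:ℝ) ∂μ) ^ ((1:ℝ)/2) := key
    _ = Real.sqrt (b - a) * Real.sqrt (∫ τ in a..b, (G τ)^2) := by
        rw [h2, h3, ← Real.sqrt_eq_rpow, ← Real.sqrt_eq_rpow]

lemma ray (F G : ℝ → ℝ) (t K L a : ℝ) (ht : 0 ≤ t) (hK : 0 ≤ K) (hL : 0 ≤ L)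
    (hF : ∀ τ, HasDerivAt F (-(G τ)) τ) (hGc : Continuous G)
    (hK2 : (∫ τ in (0:ℝ)..t, (G τ)^2) ≤ K)
    (ha0 : 0 ≤ a) (hat : a ≤ t)
    (hsupp : ∀ τ, 0 < τ → τ < a → G τ = 0)
    (hLa : t - a ≤ L) :
    |F t| ≤ |F 0| + Real.sqrt K * Real.sqrt L := by
  have hftc : ∫ τ in (0:ℝ)..t, -(G τ) = F t - F 0 :=
    intervalIntegral.integral_eq_sub_of_hasDerivAt (fun τ _ => hF τ)
      (hGc.neg.intervalIntegrable 0 t)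
  rw [intervalIntegral.integral_neg] at hftc
  have hFt : F t = F 0 - ∫ τ in (0:ℝ)..t, G τ := by linarith
  have h0a : ∫ τ in (0:ℝ)..a, G τ = 0 := by
    rw [intervalIntegral.integral_of_le ha0, MeasureTheory.integral_Ioc_eq_integral_Ioo]
    have heq : Set.EqOn G 0 (Set.Ioo 0 a) := fun τ hτ => hsupp τ hτ.1 hτ.2
    rw [MeasureTheory.setIntegral_congr_fun measurableSet_Ioo heq]
    simp
  have hsplit : ∫ τ in (0:ℝ)..t, G τ = ∫ τ in a..t, G τ := by
    rw [← intervalIntegral.integral_add_adjacent_intervals (hGc.intervalIntegrable 0 a)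
      (hGc.intervalIntegrable a t), h0a, zero_add]
  have h1 : ∫ τ in a..t, (G τ)^2 ≤ K := by
    have h0' : 0 ≤ ∫ τ in (0:ℝ)..a, (G τ)^2 :=
      intervalIntegral.integral_nonneg ha0 (fun τ _ => sq_nonneg _)
    have hi1 : IntervalIntegrable (fun τ => (G τ)^2) MeasureTheory.volume 0 a :=
      (hGc.pow 2).intervalIntegrable 0 a
    have hi2 : IntervalIntegrable (fun τ => (G τ)^2) MeasureTheory.volume a t :=
      (hGc.pow 2).intervalIntegrable a t
    have hadd := intervalIntegral.integral_add_adjacent_intervals hi1 hi2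
    linarith
  calc |F t| = |F 0 - ∫ τ in a..t, G τ| := by rw [hFt, hsplit]
    _ ≤ |F 0| + |∫ τ in a..t, G τ| := by
        rw [sub_eq_add_neg]; exact (abs_add_le _ _).trans (by rw [abs_neg])
    _ ≤ |F 0| + ∫ τ in a..t, |G τ| :=
        add_le_add_right (intervalIntegral.abs_integral_le_integral_abs hat) _
    _ ≤ |F 0| + Real.sqrt (t - a) * Real.sqrt (∫ τ in a..t, (G τ)^2) :=
        add_le_add_right (cs G a t hat hGc) _
    _ ≤ |F 0| + Real.sqrt K * Real.sqrt L := by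
        refine add_le_add_right ?_ _
        rw [mul_comm (Real.sqrt K)]
        exact mul_le_mul (Real.sqrt_le_sqrt hLa) (Real.sqrt_le_sqrt h1)
          (Real.sqrt_nonneg _) (Real.sqrt_nonneg _)

theorem stmt10 (A g h : ℝ → ℝ → ℝ) (C₀' C₀ K : ℝ) (hK : 0 ≤ K) (hC₀ : 0 < C₀)
    (hA : ContDiff ℝ 1 (fun p : ℝ × ℝ => A p.1 p.2))
    (hg : Continuous (fun p : ℝ × ℝ => g p.1 p.2))
    (hh : Continuous (fun p : ℝ × ℝ => h p.1 p.2))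
    (pde1 : ∀ t x : ℝ, deriv (fun s => A s x) t + deriv (fun y => A t y) x = - g t x)
    (pde2 : ∀ t x : ℝ, deriv (fun s => A s x) t - deriv (fun y => A t y) x = - h t x)
    (h0 : ∀ y : ℝ, |A 0 y| ≤ C₀')
    (hgK : ∀ t ≥ (0:ℝ), ∀ x : ℝ, (∫ τ in (0:ℝ)..t, (g τ (x - t + τ))^2) ≤ K)
    (hhK : ∀ t ≥ (0:ℝ), ∀ x : ℝ, (∫ τ in (0:ℝ)..t, (h τ (x + t - τ))^2) ≤ K)
    (hgsupp : ∀ τ ≥ (0:ℝ), ∀ y : ℝ, C₀ + τ ≤ |y| → g τ y = 0)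
    (hhsupp : ∀ τ ≥ (0:ℝ), ∀ y : ℝ, C₀ + τ ≤ |y| → h τ y = 0) :
    ∀ t ≥ (0:ℝ), ∀ x : ℝ,
      (|x| < C₀ + t →
        |A t x| ≤ C₀' + Real.sqrt K * Real.sqrt (min (min (t + x + C₀) (t - x + C₀)) t)) ∧
      (C₀ + t ≤ |x| → |A t x| ≤ C₀') := by
  set f : ℝ × ℝ → ℝ := fun p => A p.1 p.2 with hf
  have hdiff : Differentiable ℝ f := hA.differentiable one_ne_zero
  -- partial derivatives
  have hd1 : ∀ p : ℝ × ℝ, fderiv ℝ f p (1, 0) = deriv (fun s => A s p.2) p.1 := by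
    intro p
    have hline : HasDerivAt (fun s : ℝ => (s, p.2)) ((1:ℝ), (0:ℝ)) p.1 :=
      HasDerivAt.prodMk (hasDerivAt_id p.1) (hasDerivAt_const p.1 p.2)
    have := ((hdiff p).hasFDerivAt).comp_hasDerivAt p.1 hline
    exact (this.deriv).symm
  have hd2 : ∀ p : ℝ × ℝ, fderiv ℝ f p (0, 1) = deriv (fun y => A p.1 y) p.2 := by
    intro p
    have hline : HasDerivAt (fun y : ℝ => (p.1, y)) ((0:ℝ), (1:ℝ)) p.2 :=
      HasDerivAt.prodMk (hasDerivAt_const p.2 p.1) (hasDerivAt_id p.2)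
    have := ((hdiff p).hasFDerivAt).comp_hasDerivAt p.2 hline
    exact (this.deriv).symm
  have hsum : ∀ p : ℝ × ℝ, fderiv ℝ f p (1, 1) = -(g p.1 p.2) := by
    intro p
    have : ((1:ℝ), (1:ℝ)) = ((1:ℝ), (0:ℝ)) + ((0:ℝ), (1:ℝ)) := by simp
    rw [this, map_add, hd1, hd2]
    exact pde1 p.1 p.2
  have hdifn : ∀ p : ℝ × ℝ, fderiv ℝ f p (1, -1) = -(h p.1 p.2) := by
    intro p
    have : ((1:ℝ), (-1:ℝ)) = ((1:ℝ), (0:ℝ)) - ((0:ℝ), (1:ℝ)) := by simp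
    rw [this, map_sub, hd1, hd2]
    exact pde2 p.1 p.2
  intro t ht x
  -- g-ray
  have hg_deriv : ∀ τ : ℝ, HasDerivAt (fun τ => A τ (x - t + τ)) (-(g τ (x - t + τ))) τ := by
    intro τ
    have hline : HasDerivAt (fun τ : ℝ => (τ, x - t + τ)) ((1:ℝ), (1:ℝ)) τ :=
      HasDerivAt.prodMk (hasDerivAt_id τ) ((hasDerivAt_id τ).const_add (x - t))
    have := ((hdiff (τ, x - t + τ)).hasFDerivAt).comp_hasDerivAt τ hline
    rwa [hsum (τ, x - t + τ)] at this
  have hh_deriv : ∀ τ : ℝ, HasDerivAt (fun τ => A τ (x + t - τ)) (-(h τ (x + t - τ))) τ := by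
    intro τ
    have hline : HasDerivAt (fun τ : ℝ => (τ, x + t - τ)) ((1:ℝ), (-1:ℝ)) τ :=
      HasDerivAt.prodMk (hasDerivAt_id τ) ((hasDerivAt_id τ).const_sub (x + t))
    have := ((hdiff (τ, x + t - τ)).hasFDerivAt).comp_hasDerivAt τ hline
    rwa [hdifn (τ, x + t - τ)] at this
  have hgc : Continuous (fun τ : ℝ => g τ (x - t + τ)) := by
    exact hg.comp (continuous_id.prodMk (continuous_const.add continuous_id))
  have hhc : Continuous (fun τ : ℝ => h τ (x + t - τ)) := by
    exact hh.comp (continuous_id.prodMk (continuous_const.sub continuous_id))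
  have hAg : ∀ a L : ℝ, 0 ≤ L → 0 ≤ a → a ≤ t →
      (∀ τ, 0 < τ → τ < a → g τ (x - t + τ) = 0) → t - a ≤ L →
      |A t x| ≤ C₀' + Real.sqrt K * Real.sqrt L := by
    intro a L hL ha0 hat hsupp hLa
    have := ray (fun τ => A τ (x - t + τ)) (fun τ => g τ (x - t + τ)) t K L a
      ht hK hL hg_deriv hgc (hgK t ht x) ha0 hat hsupp hLa
    simp only [add_zero, sub_add_cancel] at this
    calc |A t x| ≤ |A 0 (x - t)| + Real.sqrt K * Real.sqrt L := this
      _ ≤ C₀' + Real.sqrt K * Real.sqrt L := add_le_add_left (h0 _) _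
  have hAh : ∀ a L : ℝ, 0 ≤ L → 0 ≤ a → a ≤ t →
      (∀ τ, 0 < τ → τ < a → h τ (x + t - τ) = 0) → t - a ≤ L →
      |A t x| ≤ C₀' + Real.sqrt K * Real.sqrt L := by
    intro a L hL ha0 hat hsupp hLa
    have := ray (fun τ => A τ (x + t - τ)) (fun τ => h τ (x + t - τ)) t K L a
      ht hK hL hh_deriv hhc (hhK t ht x) ha0 hat hsupp hLa
    simp only [sub_zero, add_sub_cancel_right] at this
    calc |A t x| ≤ |A 0 (x + t)| + Real.sqrt K * Real.sqrt L := this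
      _ ≤ C₀' + Real.sqrt K * Real.sqrt L := add_le_add_left (h0 _) _
  constructor
  · -- main bound
    intro hx
    have hx1 : -(C₀ + t) < x := neg_lt_of_abs_lt hx
    have hx2 : x < C₀ + t := lt_of_abs_lt hx
    set M := min (min (t + x + C₀) (t - x + C₀)) t with hM
    have hM0 : 0 ≤ M := le_min (le_min (by linarith) (by linarith)) ht
    rcases le_or_gt x 0 with hx0 | hx0
    · -- use g-ray
      refine hAg (max 0 ((t - x - C₀) / 2)) M hM0 (le_max_left _ _)
        (max_le ht (by linarith)) ?_ ?_
      · intro τ hτ0 hτa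
        rcases lt_max_iff.1 hτa with hc | hc
        · linarith
        · refine hgsupp τ hτ0.le _ ?_
          have : x - t + τ ≤ -(C₀ + τ) := by linarith
          calc C₀ + τ ≤ -(x - t + τ) := by linarith
            _ ≤ |x - t + τ| := neg_le_abs _
      · have h1 : (t - x - C₀) / 2 ≤ max 0 ((t - x - C₀) / 2) := le_max_right _ _
        have h2 : (0:ℝ) ≤ max 0 ((t - x - C₀) / 2) := le_max_left _ _
        refine le_min (le_min (by linarith) (by linarith)) (by linarith)
    · -- use h-ray
      refine hAh (max 0 ((t + x - C₀) / 2)) M hM0 (le_max_left _ _)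
        (max_le ht (by linarith)) ?_ ?_
      · intro τ hτ0 hτa
        rcases lt_max_iff.1 hτa with hc | hc
        · linarith
        · refine hhsupp τ hτ0.le _ ?_
          have : C₀ + τ ≤ x + t - τ := by linarith
          exact this.trans (le_abs_self _)
      · have h1 : (t + x - C₀) / 2 ≤ max 0 ((t + x - C₀) / 2) := le_max_right _ _
        have h2 : (0:ℝ) ≤ max 0 ((t + x - C₀) / 2) := le_max_left _ _
        refine le_min (le_min (by linarith) (by linarith)) (by linarith)
  · -- outside the light cone
    intro hx
    rcases le_or_gt 0 x with hx0 | hx0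
    · have hxx : C₀ + t ≤ x := by rwa [abs_of_nonneg hx0] at hx
      have := hAg t 0 le_rfl ht le_rfl ?_ (by linarith)
      · simpa using this
      · intro τ hτ0 hτt
        refine hgsupp τ hτ0.le _ ?_
        have : C₀ + τ ≤ x - t + τ := by linarith
        exact this.trans (le_abs_self _)
    · have hxx : C₀ + t ≤ -x := by rwa [abs_of_neg hx0] at hx
      have := hAh t 0 le_rfl ht le_rfl ?_ (by linarith)
      · simpa using this
      · intro τ hτ0 hτt
        refine hhsupp τ hτ0.le _ ?_
        have : x + t - τ ≤ -(C₀ + τ) := by linarith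
        calc C₀ + τ ≤ -(x + t - τ) := by linarith
          _ ≤ |x + t - τ| := neg_le_abs _
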